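/- For every x ∈ D, E_x[ Σ_{n=1}^{σ} V(X_n) ] ≤ (V(x) + b)/β, where the sum is interpreted as Σ_{n≥1} V(X_n)·1_{{n ≤ σ}} with values in [0, ∞]. -/

import Mathlib

open MeasureTheory ProbabilityTheory ENNReal

/-- The first hitting time `σ = inf {n ≥ 1 : ω n ∈ G}` of a set `G`, with value `⊤ = ∞`
if the trajectory never enters `G` at a positive time. -/
noncomputable def hittingTimeGe1 {D : Type*} (G : Set D) (ω : ℕ → D) : ℕ∞ :=
  ⨅ n ∈ {n : ℕ | 1 ≤ n ∧ ω n ∈ G}, (n : ℕ∞)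

lemma le_hittingTimeGe1_iff {D : Type*} (G : Set D) (ω : ℕ → D) (n : ℕ) :
    (n : ℕ∞) ≤ hittingTimeGe1 G ω ↔ ∀ m : ℕ, 1 ≤ m → m < n → ω m ∉ G := by
  unfold hittingTimeGe1
  rw [le_iInf₂_iff]
  constructor
  · intro h m h1 hmn hmG
    have := h m ⟨h1, hmG⟩
    have : n ≤ m := by exact_mod_cast this
    omega
  · intro h m hm
    by_contra hc
    push_neg at hc
    have : m < n := by exact_mod_cast hc
    exact h m hm.1 this hm.2

/-- One-step Markov property for lower integrals of nonnegative functions. -/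
lemma markov_lintegral_step {D : Type*} [MeasurableSpace D]
    (κ : ProbabilityTheory.Kernel D D) [ProbabilityTheory.IsMarkovKernel κ]
    (Px : D → Measure (ℕ → D))
    (hMarkov : ∀ (x : D) (n : ℕ) (B : Set (ℕ → D)),
      MeasurableSet[MeasurableSpace.comap (fun (ω : ℕ → D) (i : Fin (n + 1)) => ω i)
        inferInstance] B →
      ∀ A : Set D, MeasurableSet A →
        Px x (B ∩ {ω | ω (n + 1) ∈ A}) = ∫⁻ ω in B, κ (ω n) A ∂(Px x))
    (x : D) (n : ℕ) (B : Set (ℕ → D))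
    (hB : MeasurableSet[MeasurableSpace.comap (fun (ω : ℕ → D) (i : Fin (n + 1)) => ω i)
        inferInstance] B)
    (f : D → ℝ≥0∞) (hf : Measurable f) :
    ∫⁻ ω in B, f (ω (n + 1)) ∂(Px x) = ∫⁻ ω in B, ∫⁻ y, f y ∂(κ (ω n)) ∂(Px x) := by
  have hφ : Measurable (fun (ω : ℕ → D) (i : Fin (n + 1)) => ω i) :=
    measurable_pi_lambda _ (fun i => measurable_pi_apply _)
  have hBm : MeasurableSet B := (measurable_iff_comap_le.mp hφ) B hB
  have hκmeas : Measurable (fun ω : ℕ → D => κ (ω n)) :=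
    κ.measurable.comp (measurable_pi_apply n)
  have hmap : ((Px x).restrict B).map (fun ω => ω (n + 1))
      = ((Px x).restrict B).bind (fun ω => κ (ω n)) := by
    ext A hA
    rw [Measure.map_apply (measurable_pi_apply _) hA,
      Measure.restrict_apply ((measurable_pi_apply _) hA),
      Measure.bind_apply hA hκmeas.aemeasurable, Set.inter_comm]
    exact hMarkov x n B hB A hA
  calc ∫⁻ ω in B, f (ω (n + 1)) ∂(Px x)
      = ∫⁻ y, f y ∂(((Px x).restrict B).map (fun ω => ω (n + 1))) :=
        (lintegral_map hf (measurable_pi_apply _)).symm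
    _ = ∫⁻ y, f y ∂(((Px x).restrict B).bind (fun ω => κ (ω n))) := by rw [hmap]
    _ = ∫⁻ ω in B, ∫⁻ y, f y ∂(κ (ω n)) ∂(Px x) := Measure.lintegral_bind hκmeas.aemeasurable hf.aemeasurable

/-- For the Markov chain with kernel `κ` started at `x` (law `Px x` on path
space), under the drift condition `∫ V(y) κ(x, dy) ≤ (1 − β)·V(x) + b·1_G(x)`, one has
`E_x[Σ_{n=1}^{σ} V(X_n)] ≤ (V(x) + b)/β`, where the sum is interpreted as
`Σ_{n ≥ 1} V(X_n)·1_{n ≤ σ}` with values in `[0, ∞]`. -/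
theorem drift_sum_until_hitting_le
    {D : Type*} [MeasurableSpace D]
    (κ : ProbabilityTheory.Kernel D D) [ProbabilityTheory.IsMarkovKernel κ]
    (Px : D → Measure (ℕ → D))
    (hprob : ∀ x, IsProbabilityMeasure (Px x))
    (hstart : ∀ x, Px x {ω | ω 0 = x} = 1)
    (hMarkov : ∀ (x : D) (n : ℕ) (B : Set (ℕ → D)),
      MeasurableSet[MeasurableSpace.comap (fun (ω : ℕ → D) (i : Fin (n + 1)) => ω i)
        inferInstance] B →
      ∀ A : Set D, MeasurableSet A →
        Px x (B ∩ {ω | ω (n + 1) ∈ A}) = ∫⁻ ω in B, κ (ω n) A ∂(Px x))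
    (V : D → ℝ) (hV_meas : Measurable V) (hV_one : ∀ x, 1 ≤ V x)
    (G : Set D) (hG : MeasurableSet G)
    (β b : ℝ) (hβ : 0 < β) (hβ1 : β < 1) (hb : 0 ≤ b)
    (hdrift : ∀ x, ∫⁻ y, ENNReal.ofReal (V y) ∂(κ x)
      ≤ ENNReal.ofReal ((1 - β) * V x + b * G.indicator 1 x)) :
    ∀ x : D,
      ∫⁻ ω, (∑' n : ℕ,
          Set.indicator {m : ℕ | 1 ≤ m ∧ (m : ℕ∞) ≤ hittingTimeGe1 G ω}
            (fun m => ENNReal.ofReal (V (ω m))) n) ∂(Px x)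
        ≤ ENNReal.ofReal ((V x + b) / β) := by
  intro x
  haveI := hprob x
  set μ := Px x with hμ
  -- the events `E n = {n ≤ σ}`
  set E : ℕ → Set (ℕ → D) := fun n => {ω | ∀ m : ℕ, 1 ≤ m → m < n → ω m ∉ G} with hE
  have hE_meas : ∀ n, MeasurableSet (E n) := by
    intro n
    have : E n = ⋂ m : ℕ, {ω : ℕ → D | 1 ≤ m → m < n → ω m ∉ G} := by
      ext ω; simp [hE, Set.mem_iInter]
    rw [this]
    refine MeasurableSet.iInter (fun m => ?_)
    by_cases hc : 1 ≤ m ∧ m < n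
    · have : {ω : ℕ → D | 1 ≤ m → m < n → ω m ∉ G} = (fun ω : ℕ → D => ω m) ⁻¹' Gᶜ := by
        ext ω; simp [hc.1, hc.2]
      rw [this]; exact (measurable_pi_apply m) hG.compl
    · have : {ω : ℕ → D | 1 ≤ m → m < n → ω m ∉ G} = Set.univ := by
        ext ω; simp only [Set.mem_setOf_eq, Set.mem_univ, iff_true]
        intro h1 h2; exact absurd ⟨h1, h2⟩ hc
      rw [this]; exact MeasurableSet.univ
  -- `E (n+1)` is measurable with respect to the first `n+1` coordinates
  have hE_comap : ∀ n : ℕ,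
      MeasurableSet[MeasurableSpace.comap (fun (ω : ℕ → D) (i : Fin (n + 1)) => ω i)
        inferInstance] (E (n + 1)) := by
    intro n
    rw [MeasurableSpace.measurableSet_comap]
    refine ⟨⋂ m : Fin (n + 1), {v : Fin (n + 1) → D | 1 ≤ (m : ℕ) → v m ∈ Gᶜ}, ?_, ?_⟩
    · refine MeasurableSet.iInter (fun m => ?_)
      by_cases hm : 1 ≤ (m : ℕ)
      · have : {v : Fin (n + 1) → D | 1 ≤ (m : ℕ) → v m ∈ Gᶜ}
            = (fun v : Fin (n + 1) → D => v m) ⁻¹' Gᶜ := by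
          ext v; simp [hm]
        rw [this]; exact (measurable_pi_apply m) hG.compl
      · have : {v : Fin (n + 1) → D | 1 ≤ (m : ℕ) → v m ∈ Gᶜ} = Set.univ := by
          ext v; simp [hm]
        rw [this]; exact MeasurableSet.univ
    · ext ω
      simp only [Set.mem_preimage, Set.mem_iInter, Set.mem_setOf_eq, Set.mem_compl_iff, hE]
      constructor
      · intro h m h1 hlt
        exact h ⟨m, hlt⟩ h1
      · intro h m hm
        exact h (m : ℕ) hm m.isLt
  -- the quantities `a n = E[V(X_n) 1_{n ≤ σ}]`
  set a : ℕ → ℝ≥0∞ := fun n => ∫⁻ ω in E n, ENNReal.ofReal (V (ω n)) ∂μ with ha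
  set r : ℝ≥0∞ := ENNReal.ofReal (1 - β) with hr
  set C : ℝ≥0∞ := ENNReal.ofReal ((1 - β) * V x + b) with hC
  have hβ' : (0:ℝ) ≤ 1 - β := by linarith
  -- base bound : a 1 ≤ C
  have hbase : a 1 ≤ C := by
    have hE1 : E 1 = Set.univ := by
      ext ω; simp only [hE, Set.mem_setOf_eq, Set.mem_univ, iff_true]
      intro m h1 h2; omega
    have hcomap0 : MeasurableSet[MeasurableSpace.comap
        (fun (ω : ℕ → D) (i : Fin (0 + 1)) => ω i) inferInstance] (Set.univ : Set (ℕ → D)) :=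
      MeasurableSet.univ
    have hstep := markov_lintegral_step κ Px hMarkov x 0 Set.univ hcomap0
      (fun y => ENNReal.ofReal (V y)) (ENNReal.measurable_ofReal.comp hV_meas)
    have h1 : a 1 = ∫⁻ ω, ∫⁻ y, ENNReal.ofReal (V y) ∂(κ (ω 0)) ∂μ := by
      rw [Measure.restrict_univ] at hstep
      simp only [ha, hE1, Measure.restrict_univ]
      exact hstep
    -- the function `g` below is `ofReal((1-β) V y + b 1_G y)`
    set g : D → ℝ≥0∞ := fun y => ENNReal.ofReal ((1 - β) * V y + b * G.indicator 1 y) with hg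
    have hg_meas : Measurable g := by
      apply ENNReal.measurable_ofReal.comp
      apply Measurable.add
      · exact (measurable_const.mul hV_meas)
      · exact measurable_const.mul (measurable_one.indicator hG)
    have h2 : a 1 ≤ ∫⁻ ω, g (ω 0) ∂μ := by
      rw [h1]; exact lintegral_mono (fun ω => hdrift (ω 0))
    -- a.e., `ω 0 = x`, hence `g (ω 0) = g x`
    have hU : μ {ω : ℕ → D | g (ω 0) ≠ g x} = 0 := by
      set U := {ω : ℕ → D | g (ω 0) ≠ g x} with hUdef
      have hUm : MeasurableSet U := by
        have : Measurable (fun ω : ℕ → D => g (ω 0)) := hg_meas.comp (measurable_pi_apply 0)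
        exact (this (measurableSet_singleton (g x))).compl
      have hsub : {ω : ℕ → D | ω 0 = x} ⊆ Uᶜ := by
        intro ω hω
        simp only [Set.mem_compl_iff, hUdef, Set.mem_setOf_eq, not_not]
        rw [hω]
      have hUc : μ Uᶜ = 1 := le_antisymm prob_le_one (by
        calc (1:ℝ≥0∞) = μ {ω : ℕ → D | ω 0 = x} := (hstart x).symm
          _ ≤ μ Uᶜ := measure_mono hsub)
      have := measure_compl hUm.compl (measure_ne_top μ Uᶜ)
      rw [compl_compl, hUc, measure_univ] at this
      simpa using this
    have h3 : ∫⁻ ω, g (ω 0) ∂μ = g x := by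
      have hae : (fun ω : ℕ → D => g (ω 0)) =ᵐ[μ] (fun _ => g x) := by
        rw [Filter.EventuallyEq, ae_iff]
        exact hU
      rw [lintegral_congr_ae hae, lintegral_const, measure_univ, mul_one]
    have h4 : g x ≤ C := by
      rw [hg, hC]
      apply ENNReal.ofReal_le_ofReal
      have : G.indicator (1 : D → ℝ) x ≤ 1 := by
        by_cases hx : x ∈ G <;> simp [Set.indicator_apply, hx]
      nlinarith [hb]
    calc a 1 ≤ ∫⁻ ω, g (ω 0) ∂μ := h2
      _ = g x := h3
      _ ≤ C := h4
  -- inductive step : a (n+2) ≤ r * a (n+1)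
  have hstep' : ∀ n : ℕ, a (n + 2) ≤ r * a (n + 1) := by
    intro n
    have hstep := markov_lintegral_step κ Px hMarkov x (n + 1) (E (n + 2)) (hE_comap (n + 1))
      (fun y => ENNReal.ofReal (V y)) (ENNReal.measurable_ofReal.comp hV_meas)
    have h1 : a (n + 2) = ∫⁻ ω in E (n + 2), ∫⁻ y, ENNReal.ofReal (V y) ∂(κ (ω (n + 1))) ∂μ :=
      hstep
    have h2 : a (n + 2) ≤
        ∫⁻ ω in E (n + 2), ENNReal.ofReal ((1 - β) * V (ω (n + 1)) +
          b * G.indicator 1 (ω (n + 1))) ∂μ := by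
      rw [h1]; exact lintegral_mono (fun ω => hdrift (ω (n + 1)))
    have h3 : ∀ ω ∈ E (n + 2),
        ENNReal.ofReal ((1 - β) * V (ω (n + 1)) + b * G.indicator 1 (ω (n + 1)))
          = r * ENNReal.ofReal (V (ω (n + 1))) := by
      intro ω hω
      have hnot : ω (n + 1) ∉ G := hω (n + 1) (by omega) (by omega)
      rw [Set.indicator_of_notMem hnot, mul_zero, add_zero, hr,
        ← ENNReal.ofReal_mul hβ']
    have h4 : ∫⁻ ω in E (n + 2), ENNReal.ofReal ((1 - β) * V (ω (n + 1)) +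
          b * G.indicator 1 (ω (n + 1))) ∂μ
        = r * ∫⁻ ω in E (n + 2), ENNReal.ofReal (V (ω (n + 1))) ∂μ := by
      rw [setLIntegral_congr_fun (hE_meas (n + 2)) h3,
        lintegral_const_mul]
      exact ENNReal.measurable_ofReal.comp (hV_meas.comp (measurable_pi_apply (n + 1)))
    have h5 : ∫⁻ ω in E (n + 2), ENNReal.ofReal (V (ω (n + 1))) ∂μ ≤ a (n + 1) := by
      rw [ha]
      apply lintegral_mono'
      · apply Measure.restrict_mono _ le_rfl
        intro ω hω m h1 h2
        exact hω m h1 (by omega)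
      · exact le_rfl
    calc a (n + 2) ≤ r * ∫⁻ ω in E (n + 2), ENNReal.ofReal (V (ω (n + 1))) ∂μ := by
          rw [← h4]; exact h2
      _ ≤ r * a (n + 1) := mul_le_mul_right h5 _
  -- geometric bound : a (n+1) ≤ r^n * C
  have hgeom : ∀ n : ℕ, a (n + 1) ≤ r ^ n * C := by
    intro n
    induction n with
    | zero => simpa using hbase
    | succ n ih =>
      calc a (n + 2) ≤ r * a (n + 1) := hstep' n
        _ ≤ r * (r ^ n * C) := mul_le_mul_right ih _
        _ = r ^ (n + 1) * C := by ring
  -- identify each term of the sum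
  have hterm : ∀ (n : ℕ) (ω : ℕ → D),
      Set.indicator {m : ℕ | 1 ≤ m ∧ (m : ℕ∞) ≤ hittingTimeGe1 G ω}
        (fun m => ENNReal.ofReal (V (ω m))) n
      = if 1 ≤ n then (E n).indicator (fun ω => ENNReal.ofReal (V (ω n))) ω else 0 := by
    intro n ω
    by_cases h1 : 1 ≤ n
    · rw [if_pos h1]
      by_cases h2 : ω ∈ E n
      · rw [Set.indicator_of_mem h2, Set.indicator_of_mem]
        exact ⟨h1, (le_hittingTimeGe1_iff G ω n).mpr h2⟩
      · rw [Set.indicator_of_notMem h2, Set.indicator_of_notMem]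
        intro hmem
        exact h2 ((le_hittingTimeGe1_iff G ω n).mp hmem.2)
    · rw [if_neg h1, Set.indicator_of_notMem]
      intro hmem; exact h1 hmem.1
  have hterm_meas : ∀ n : ℕ, Measurable (fun ω : ℕ → D =>
      Set.indicator {m : ℕ | 1 ≤ m ∧ (m : ℕ∞) ≤ hittingTimeGe1 G ω}
        (fun m => ENNReal.ofReal (V (ω m))) n) := by
    intro n
    have : (fun ω : ℕ → D =>
        Set.indicator {m : ℕ | 1 ≤ m ∧ (m : ℕ∞) ≤ hittingTimeGe1 G ω}
          (fun m => ENNReal.ofReal (V (ω m))) n)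
        = fun ω => if 1 ≤ n then (E n).indicator (fun ω => ENNReal.ofReal (V (ω n))) ω else 0 := by
      funext ω; exact hterm n ω
    rw [this]
    by_cases h1 : 1 ≤ n
    · simp only [h1, if_true]
      exact (ENNReal.measurable_ofReal.comp (hV_meas.comp (measurable_pi_apply n))).indicator
        (hE_meas n)
    · simp [h1]
  -- swap integral and sum
  have hswap : ∫⁻ ω, (∑' n : ℕ,
      Set.indicator {m : ℕ | 1 ≤ m ∧ (m : ℕ∞) ≤ hittingTimeGe1 G ω}
        (fun m => ENNReal.ofReal (V (ω m))) n) ∂μ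
      = ∑' n : ℕ, ∫⁻ ω,
        Set.indicator {m : ℕ | 1 ≤ m ∧ (m : ℕ∞) ≤ hittingTimeGe1 G ω}
          (fun m => ENNReal.ofReal (V (ω m))) n ∂μ :=
    lintegral_tsum (fun n => (hterm_meas n).aemeasurable)
  have hterm_int : ∀ n : ℕ, ∫⁻ ω,
      Set.indicator {m : ℕ | 1 ≤ m ∧ (m : ℕ∞) ≤ hittingTimeGe1 G ω}
        (fun m => ENNReal.ofReal (V (ω m))) n ∂μ
      = if 1 ≤ n then a n else 0 := by
    intro n
    rw [lintegral_congr (fun ω => hterm n ω)]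
    by_cases h1 : 1 ≤ n
    · simp only [h1, if_true]
      rw [lintegral_indicator (hE_meas n)]
    · simp [h1]
  rw [hμ] at *
  rw [hswap]
  calc ∑' n : ℕ, ∫⁻ ω,
        Set.indicator {m : ℕ | 1 ≤ m ∧ (m : ℕ∞) ≤ hittingTimeGe1 G ω}
          (fun m => ENNReal.ofReal (V (ω m))) n ∂μ
      = ∑' n : ℕ, (if 1 ≤ n then a n else 0) := by
        exact tsum_congr hterm_int
    _ = (if 1 ≤ 0 then a 0 else 0) + ∑' n : ℕ, (if 1 ≤ n + 1 then a (n + 1) else 0) :=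
        tsum_eq_zero_add' ENNReal.summable
    _ = ∑' n : ℕ, a (n + 1) := by
        simp only [show ¬ (1 ≤ 0) by omega, if_false, zero_add]
        exact tsum_congr (fun n => by simp)
    _ ≤ ∑' n : ℕ, r ^ n * C := ENNReal.tsum_le_tsum hgeom
    _ = (∑' n : ℕ, r ^ n) * C := ENNReal.tsum_mul_right
    _ = (1 - r)⁻¹ * C := by rw [ENNReal.tsum_geometric]
    _ = (ENNReal.ofReal β)⁻¹ * C := by
        congr 1
        rw [hr, show (1:ℝ≥0∞) = ENNReal.ofReal 1 by simp,
          ← ENNReal.ofReal_sub _ hβ']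
        norm_num
    _ ≤ (ENNReal.ofReal β)⁻¹ * ENNReal.ofReal (V x + b) := by
        apply mul_le_mul_right
        rw [hC]
        apply ENNReal.ofReal_le_ofReal
        nlinarith [hV_one x]
    _ = ENNReal.ofReal ((V x + b) / β) := by
        rw [ENNReal.ofReal_div_of_pos hβ, div_eq_mul_inv, mul_comm]
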